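/- (Puncturing multiplicity under faithful lift.) Let α : Fin k → ℤ and let J ⊆ Fin k be nonempty with α_j < 0 for all j ∈ J; set a := max_{j ∈ J} α_j and define α' : Option (Fin k) → ℤ by α'(none) = a, α'(some j) = α_j − a for j ∈ J, α'(some j) = α_j otherwise. Define the puncturing multiplicity m(β) := Σ over indices i with β_i < 0 of (−β_i). Then m(α') = m(α) + (|J| − 1)·a; in particular if |J| ≥ 2 then m(α') < m(α). -/
import Mathlib


/-- Puncturing multiplicity under faithful lift: `m(α') = m(α) + (|J| − 1)·a`, and if
`|J| ≥ 2` then `m(α') < m(α)`. -/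
theorem faithful_lift_multiplicity (k : ℕ) (α : Fin k → ℤ)
    (J : Finset (Fin k)) (hJ : J.Nonempty)
    (hneg : ∀ j ∈ J, α j < 0)
    (a : ℤ) (ha : a = (J.image α).max' (hJ.image α))
    (α' : Option (Fin k) → ℤ)
    (h0 : α' none = a)
    (h1 : ∀ j ∈ J, α' (some j) = α j - a)
    (h2 : ∀ j ∉ J, α' (some j) = α j) :
    (∑ o ∈ Finset.univ.filter (fun o : Option (Fin k) => α' o < 0), (-(α' o))) =
      (∑ j ∈ Finset.univ.filter (fun j : Fin k => α j < 0), (-(α j))) +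
        ((J.card : ℤ) - 1) * a ∧
    (2 ≤ J.card →
      (∑ o ∈ Finset.univ.filter (fun o : Option (Fin k) => α' o < 0), (-(α' o))) <
        (∑ j ∈ Finset.univ.filter (fun j : Fin k => α j < 0), (-(α j)))) := by
  have haneg : a < 0 := by
    obtain ⟨j0, hj0, hj0a⟩ := Finset.mem_image.mp (ha ▸ (J.image α).max'_mem (hJ.image α))
    exact hj0a ▸ hneg j0 hj0
  have hle : ∀ j ∈ J, α j ≤ a := fun j hj =>
    ha ▸ Finset.le_max' _ _ (Finset.mem_image_of_mem α hj)
  have key : (∑ o ∈ Finset.univ.filter (fun o : Option (Fin k) => α' o < 0), (-(α' o))) =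
      (∑ j ∈ Finset.univ.filter (fun j : Fin k => α j < 0), (-(α j))) +
        ((J.card : ℤ) - 1) * a := by
    rw [Finset.sum_filter, Finset.sum_filter, Fintype.sum_option]
    rw [← Finset.sum_filter_add_sum_filter_not Finset.univ (· ∈ J)
      (fun j => if α' (some j) < 0 then -(α' (some j)) else 0)]
    rw [← Finset.sum_filter_add_sum_filter_not Finset.univ (· ∈ J)
      (fun j => if α j < 0 then -(α j) else 0)]
    have e1 : (∑ j ∈ Finset.univ.filter (· ∈ J),
        (if α' (some j) < 0 then -(α' (some j)) else 0))
        = ∑ j ∈ Finset.univ.filter (· ∈ J), (a - α j) := by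
      apply Finset.sum_congr rfl
      intro j hj
      have hj' : j ∈ J := (Finset.mem_filter.mp hj).2
      have hle' := hle j hj'
      rw [h1 j hj']
      rcases lt_or_eq_of_le hle' with h | h
      · rw [if_pos (by omega)]; ring
      · rw [if_neg (by omega)]; omega
    have e2 : (∑ j ∈ Finset.univ.filter (¬ · ∈ J),
        (if α' (some j) < 0 then -(α' (some j)) else 0))
        = ∑ j ∈ Finset.univ.filter (¬ · ∈ J), (if α j < 0 then -(α j) else 0) := by
      apply Finset.sum_congr rfl
      intro j hj
      rw [h2 j (Finset.mem_filter.mp hj).2]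
    have e3 : (∑ j ∈ Finset.univ.filter (· ∈ J), (if α j < 0 then -(α j) else 0))
        = ∑ j ∈ Finset.univ.filter (· ∈ J), (-(α j)) := by
      apply Finset.sum_congr rfl
      intro j hj
      rw [if_pos (hneg j (Finset.mem_filter.mp hj).2)]
    have efilt : Finset.univ.filter (· ∈ J) = J := Finset.filter_univ_mem J
    have e4 : (∑ j ∈ Finset.univ.filter (· ∈ J), (a - α j))
        = (J.card : ℤ) * a + ∑ j ∈ Finset.univ.filter (· ∈ J), (-(α j)) := by
      rw [efilt, Finset.sum_sub_distrib, Finset.sum_const, Finset.sum_neg_distrib,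
        nsmul_eq_mul]
      ring
    rw [e1, e2, e3, e4, h0, if_pos haneg]
    ring
  refine ⟨key, fun hcard => ?_⟩
  have : ((J.card : ℤ) - 1) * a < 0 := by
    apply mul_neg_of_pos_of_neg _ haneg
    have : (2 : ℤ) ≤ (J.card : ℤ) := by exact_mod_cast hcard
    linarith
  linarith [key]
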